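/- The defining equations of the space of oriented triangles have everywhere-surjective differential, so by the implicit function theorem the solution set is a smooth variety: let V = {(q₁, q₂, q₃) ∈ (ℝ³)³ : m₁q₁ + m₂q₂ + m₃q₃ = 0} for fixed masses m₁, m₂, m₃ > 0, and define F : V × ℝ³ → ℝ³ by F(q, n) = (⟨n, q₁⟩, ⟨n, q₂⟩, ‖n‖²). Then at every point (q, n) ∈ V × ℝ³ with n ≠ 0, the Fréchet derivative of F is a surjective linear map onto ℝ³. -/

import Mathlib

noncomputable section

/-- `ℝ³` with the Euclidean norm. -/
abbrev R3 : Type := EuclideanSpace ℝ (Fin 3)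

/-- The center-of-mass linear map `(q₁, q₂, q₃) ↦ m₁q₁ + m₂q₂ + m₃q₃`. -/
def comMap (m₁ m₂ m₃ : ℝ) : (R3 × R3 × R3) →ₗ[ℝ] R3 :=
  m₁ • LinearMap.fst ℝ R3 (R3 × R3)
    + m₂ • (LinearMap.fst ℝ R3 R3).comp (LinearMap.snd ℝ R3 (R3 × R3))
    + m₃ • (LinearMap.snd ℝ R3 R3).comp (LinearMap.snd ℝ R3 (R3 × R3))

/-- The center-of-mass-zero three-body configuration space
`V = {(q₁, q₂, q₃) : m₁q₁ + m₂q₂ + m₃q₃ = 0}`. -/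
def comZero (m₁ m₂ m₃ : ℝ) : Submodule ℝ (R3 × R3 × R3) :=
  LinearMap.ker (comMap m₁ m₂ m₃)

/-- The defining map `F(q, n) = (⟨n, q₁⟩, ⟨n, q₂⟩, ‖n‖²)` of the space of oriented
triangles, on `V × ℝ³`. -/
def defMap (m₁ m₂ m₃ : ℝ) (p : comZero m₁ m₂ m₃ × R3) : ℝ × ℝ × ℝ :=
  ((inner ℝ p.2 (p.1 : R3 × R3 × R3).1 : ℝ),
    (inner ℝ p.2 (p.1 : R3 × R3 × R3).2.1 : ℝ),
    ‖p.2‖ ^ 2)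

/-- The defining equations of the space of oriented triangles have everywhere-surjective
differential: at every point `(q, n) ∈ V × ℝ³` with `n ≠ 0`, the Fréchet derivative of
`F(q, n) = (⟨n, q₁⟩, ⟨n, q₂⟩, ‖n‖²)` is a surjective linear map onto `ℝ³`. -/
theorem oriented_triangle_equations_submersion
    (m₁ m₂ m₃ : ℝ) (hm₁ : 0 < m₁) (hm₂ : 0 < m₂) (hm₃ : 0 < m₃)
    (q : comZero m₁ m₂ m₃) (n : R3) (hn : n ≠ 0) :
    Function.Surjective (fderiv ℝ (defMap m₁ m₂ m₃) (q, n)) := by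
  set G := comZero m₁ m₂ m₃ × R3
  let N : G →L[ℝ] R3 := ContinuousLinearMap.snd ℝ _ R3
  let ι : (comZero m₁ m₂ m₃ : Type) →L[ℝ] (R3 × R3 × R3) := (comZero m₁ m₂ m₃).subtypeL
  let P : G →L[ℝ] (R3 × R3 × R3) := ι.comp (ContinuousLinearMap.fst ℝ _ R3)
  let Q1 : G →L[ℝ] R3 := (ContinuousLinearMap.fst ℝ R3 (R3 × R3)).comp P
  let Q2 : G →L[ℝ] R3 :=
    ((ContinuousLinearMap.fst ℝ R3 R3).comp (ContinuousLinearMap.snd ℝ R3 (R3 × R3))).comp P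
  have hdef : defMap m₁ m₂ m₃ = fun p : G =>
      ((inner ℝ (N p) (Q1 p) : ℝ), (inner ℝ (N p) (Q2 p) : ℝ), (inner ℝ (N p) (N p) : ℝ)) := by
    funext p
    simp only [defMap, N, Q1, Q2, P, ι, ContinuousLinearMap.comp_apply,
      ContinuousLinearMap.coe_fst', ContinuousLinearMap.coe_snd',
      Submodule.subtypeL_apply, real_inner_self_eq_norm_sq]
    rfl
  have h1 : HasFDerivAt (fun p : G => (inner ℝ (N p) (Q1 p) : ℝ))
      ((fderivInnerCLM ℝ (N (q, n), Q1 (q, n))).comp (N.prod Q1)) (q, n) :=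
    (N.hasFDerivAt).inner ℝ (Q1.hasFDerivAt)
  have h2 : HasFDerivAt (fun p : G => (inner ℝ (N p) (Q2 p) : ℝ))
      ((fderivInnerCLM ℝ (N (q, n), Q2 (q, n))).comp (N.prod Q2)) (q, n) :=
    (N.hasFDerivAt).inner ℝ (Q2.hasFDerivAt)
  have h3 : HasFDerivAt (fun p : G => (inner ℝ (N p) (N p) : ℝ))
      ((fderivInnerCLM ℝ (N (q, n), N (q, n))).comp (N.prod N)) (q, n) :=
    (N.hasFDerivAt).inner ℝ (N.hasFDerivAt)
  have hD : HasFDerivAt (defMap m₁ m₂ m₃)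
      (((fderivInnerCLM ℝ (N (q, n), Q1 (q, n))).comp (N.prod Q1)).prod
        ((((fderivInnerCLM ℝ (N (q, n), Q2 (q, n))).comp (N.prod Q2))).prod
          ((fderivInnerCLM ℝ (N (q, n), N (q, n))).comp (N.prod N)))) (q, n) := by
    rw [hdef]; exact h1.prodMk (h2.prodMk h3)
  rw [hD.fderiv]
  rintro ⟨a, b, c⟩
  have hnn : (0:ℝ) < ‖n‖ ^ 2 := pow_pos (norm_pos_iff.mpr hn) 2
  set w : R3 := (c / (2 * ‖n‖ ^ 2)) • n with hw
  set α : ℝ := (a - (inner ℝ w ((q : R3 × R3 × R3).1) : ℝ)) / ‖n‖ ^ 2 with hα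
  set β : ℝ := (b - (inner ℝ w ((q : R3 × R3 × R3).2.1) : ℝ)) / ‖n‖ ^ 2 with hβ
  have hmem : (α • n, β • n, (-(m₁ * α + m₂ * β) / m₃) • n) ∈ comZero m₁ m₂ m₃ := by
    simp only [comZero, LinearMap.mem_ker, comMap, LinearMap.add_apply, LinearMap.smul_apply,
      LinearMap.coe_comp, Function.comp_apply, LinearMap.fst_apply, LinearMap.snd_apply]
    rw [smul_smul, smul_smul, smul_smul, ← add_smul, ← add_smul]
    convert zero_smul ℝ n
    field_simp
    ring
  refine ⟨(⟨_, hmem⟩, w), ?_⟩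
  have key : ∀ (v : comZero m₁ m₂ m₃) (u : R3),
      (((fderivInnerCLM ℝ (N (q, n), Q1 (q, n))).comp (N.prod Q1)).prod
        ((((fderivInnerCLM ℝ (N (q, n), Q2 (q, n))).comp (N.prod Q2))).prod
          ((fderivInnerCLM ℝ (N (q, n), N (q, n))).comp (N.prod N)))) (v, u)
      = ((inner ℝ n ((v : R3 × R3 × R3).1) : ℝ) + (inner ℝ u ((q : R3 × R3 × R3).1) : ℝ),
         (inner ℝ n ((v : R3 × R3 × R3).2.1) : ℝ) + (inner ℝ u ((q : R3 × R3 × R3).2.1) : ℝ),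
         (inner ℝ n u : ℝ) + (inner ℝ u n : ℝ)) := by
    intro v u
    simp only [ContinuousLinearMap.prod_apply, ContinuousLinearMap.comp_apply,
      fderivInnerCLM_apply, N, Q1, Q2, P, ι, ContinuousLinearMap.coe_fst',
      ContinuousLinearMap.coe_snd', Submodule.subtypeL_apply]
    rfl
  rw [key]
  have hin : (inner ℝ n n : ℝ) = ‖n‖ ^ 2 := real_inner_self_eq_norm_sq n
  refine Prod.ext ?_ (Prod.ext ?_ ?_)
  · simp only [hα, inner_smul_right, hin]
    field_simp
    ring
  · simp only [hβ, inner_smul_right, hin]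
    field_simp
    ring
  · simp only [hw, inner_smul_right, inner_smul_left, real_inner_comm n, hin, conj_trivial]
    field_simp
    ring
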